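/- (Surface Piola identity: I_S · ∂_{ξα}(J_S ∇_S ξ_α) = 0.) Let x : ℝ² → ℝ³ be twice continuously differentiable on a neighborhood of a point p, with tangent vectors t_α(ξ) = ∂_α x(ξ), and suppose t₁ ×₃ t₂ ≠ 0 on that neighborhood; let n(ξ) = (t₁ ×₃ t₂)/‖t₁ ×₃ t₂‖ be the unit normal. Then at p, the orthogonal projection onto the tangent plane of ∂₁(t₂ ×₃ n) + ∂₂(n ×₃ t₁) vanishes: (I − n(p) n(p)ᵀ) [∂₁(t₂ ×₃ n)(p) + ∂₂(n ×₃ t₁)(p)] = 0. -/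

import Mathlib

open scoped RealInnerProductSpace

noncomputable def cross3 (u v : EuclideanSpace ℝ (Fin 3)) : EuclideanSpace ℝ (Fin 3) :=
  WithLp.toLp 2 ![u 1 * v 2 - u 2 * v 1, u 2 * v 0 - u 0 * v 2, u 0 * v 1 - u 1 * v 0]

section aux

lemma inner3 (a b : EuclideanSpace ℝ (Fin 3)) : ⟪a, b⟫ = a 0 * b 0 + a 1 * b 1 + a 2 * b 2 := by
  simp [PiLp.inner_apply, RCLike.inner_apply, Fin.sum_univ_three]; ring

lemma cross3_anti (u v : EuclideanSpace ℝ (Fin 3)) : cross3 u v = - cross3 v u := by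
  ext i; fin_cases i <;> simp [cross3] <;> ring

lemma inner_cross_left (a b : EuclideanSpace ℝ (Fin 3)) : ⟪cross3 a b, a⟫ = 0 := by
  simp [inner3, cross3, Fin.sum_univ_three]; ring

lemma inner_cross_right (a b : EuclideanSpace ℝ (Fin 3)) : ⟪cross3 a b, b⟫ = 0 := by
  simp [inner3, cross3, Fin.sum_univ_three]; ring

lemma inner_cross_cyclic (a b c : EuclideanSpace ℝ (Fin 3)) :
    ⟪cross3 a b, c⟫ = ⟪cross3 c a, b⟫ := by
  simp [inner3, cross3, Fin.sum_univ_three]; ring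

lemma eq_zero_of_inner (a b w : EuclideanSpace ℝ (Fin 3)) (h : cross3 a b ≠ 0)
    (h1 : ⟪w, a⟫ = 0) (h2 : ⟪w, b⟫ = 0) (h3 : ⟪w, cross3 a b⟫ = 0) : w = 0 := by
  have key : ⟪w, w⟫ * ⟪cross3 a b, cross3 a b⟫ =
      ⟪w, b⟫^2 * ⟪a, a⟫ - 2 * ⟪w, a⟫ * ⟪w, b⟫ * ⟪a, b⟫ + ⟪w, a⟫^2 * ⟪b, b⟫
        + ⟪w, cross3 a b⟫^2 := by
    simp only [inner3]; simp [cross3, Fin.sum_univ_three]; ring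
  rw [h1, h2, h3] at key
  have hc : ⟪cross3 a b, cross3 a b⟫ ≠ (0:ℝ) := fun hh => h (inner_self_eq_zero.mp hh)
  have hw : ⟪w, w⟫ = (0:ℝ) := by
    have h0 : ⟪w, w⟫ * ⟪cross3 a b, cross3 a b⟫ = 0 := by rw [key]; ring
    rcases mul_eq_zero.1 h0 with h' | h'
    · exact h'
    · exact absurd h' hc
  exact inner_self_eq_zero.1 hw

noncomputable def crossBil : EuclideanSpace ℝ (Fin 3) →ₗ[ℝ] EuclideanSpace ℝ (Fin 3)
    →ₗ[ℝ] EuclideanSpace ℝ (Fin 3) :=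
  LinearMap.mk₂ ℝ cross3
    (fun a b c => by ext i; fin_cases i <;> simp [cross3] <;> ring)
    (fun r a c => by ext i; fin_cases i <;> simp [cross3] <;> ring)
    (fun a b c => by ext i; fin_cases i <;> simp [cross3] <;> ring)
    (fun r a c => by ext i; fin_cases i <;> simp [cross3] <;> ring)

noncomputable def crossCLM : EuclideanSpace ℝ (Fin 3) →L[ℝ] EuclideanSpace ℝ (Fin 3)
    →L[ℝ] EuclideanSpace ℝ (Fin 3) :=
  LinearMap.toContinuousLinearMap
    { toFun := fun u => LinearMap.toContinuousLinearMap (crossBil u)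
      map_add' := by intros u v; ext w; simp
      map_smul' := by intros r u; ext w; simp }

lemma crossCLM_apply (u v : EuclideanSpace ℝ (Fin 3)) : crossCLM u v = cross3 u v := rfl

lemma fderiv_cross_apply {f g : (Fin 2 → ℝ) → EuclideanSpace ℝ (Fin 3)}
    {f' g' : (Fin 2 → ℝ) →L[ℝ] EuclideanSpace ℝ (Fin 3)} {p : Fin 2 → ℝ}
    (hf : HasFDerivAt f f' p) (hg : HasFDerivAt g g' p) (e : Fin 2 → ℝ) :
    fderiv ℝ (fun ξ => cross3 (f ξ) (g ξ)) p e = cross3 (f' e) (g p) + cross3 (f p) (g' e) := by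
  have hc : HasFDerivAt (fun ξ => crossCLM (f ξ)) (crossCLM.comp f') p :=
    crossCLM.hasFDerivAt.comp p hf
  have h := hc.clm_apply hg
  have h2 : fderiv ℝ (fun ξ => cross3 (f ξ) (g ξ)) p
      = (crossCLM (f p)).comp g' + (crossCLM.comp f').flip (g p) := h.fderiv
  rw [h2]; simp [crossCLM_apply]; abel

lemma differentiableAt_cross {f g : (Fin 2 → ℝ) → EuclideanSpace ℝ (Fin 3)} {p : Fin 2 → ℝ}
    (hf : DifferentiableAt ℝ f p) (hg : DifferentiableAt ℝ g p) :
    DifferentiableAt ℝ (fun ξ => cross3 (f ξ) (g ξ)) p :=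
  ((crossCLM.hasFDerivAt.comp p hf.hasFDerivAt).clm_apply hg.hasFDerivAt).differentiableAt

end aux

/-- Surface Piola identity: for a `C²` parametrization `x : ℝ² → ℝ³` with tangent vectors
`t_α = ∂_α x` satisfying `t₁ ×₃ t₂ ≠ 0` near `p`, and unit normal
`n = (t₁ ×₃ t₂)/‖t₁ ×₃ t₂‖`, the tangential projection of
`∂₁(t₂ ×₃ n) + ∂₂(n ×₃ t₁)` vanishes at `p`. -/
theorem surface_piola_identity (x : (Fin 2 → ℝ) → EuclideanSpace ℝ (Fin 3))
    (U : Set (Fin 2 → ℝ)) (hU : IsOpen U) (p : Fin 2 → ℝ) (hp : p ∈ U)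
    (hx : ContDiffOn ℝ 2 x U)
    (t : Fin 2 → (Fin 2 → ℝ) → EuclideanSpace ℝ (Fin 3))
    (ht : ∀ α ξ, t α ξ = fderiv ℝ x ξ (Pi.single α 1))
    (hreg : ∀ ξ ∈ U, cross3 (t 0 ξ) (t 1 ξ) ≠ 0)
    (n : (Fin 2 → ℝ) → EuclideanSpace ℝ (Fin 3))
    (hn : ∀ ξ, n ξ = ‖cross3 (t 0 ξ) (t 1 ξ)‖⁻¹ • cross3 (t 0 ξ) (t 1 ξ)) :
    (fderiv ℝ (fun ξ => cross3 (t 1 ξ) (n ξ)) p (Pi.single 0 1)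
        + fderiv ℝ (fun ξ => cross3 (n ξ) (t 0 ξ)) p (Pi.single 1 1))
      - ⟪n p, fderiv ℝ (fun ξ => cross3 (t 1 ξ) (n ξ)) p (Pi.single 0 1)
            + fderiv ℝ (fun ξ => cross3 (n ξ) (t 0 ξ)) p (Pi.single 1 1)⟫ • n p
      = 0 := by
  set e0 : Fin 2 → ℝ := Pi.single 0 1 with he0
  set e1 : Fin 2 → ℝ := Pi.single 1 1 with he1
  set F : (Fin 2 → ℝ) → (Fin 2 → ℝ) →L[ℝ] EuclideanSpace ℝ (Fin 3) := fun ξ => fderiv ℝ x ξ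
    with hF
  -- x has derivative F on U
  have hxd : ∀ ξ ∈ U, HasFDerivAt x (F ξ) ξ := fun ξ hξ =>
    ((hx.differentiableOn (by norm_num)).differentiableAt (hU.mem_nhds hξ)).hasFDerivAt
  -- F is differentiable at p
  have hFc : ContDiffOn ℝ 1 F U := hx.fderiv_of_isOpen hU (by norm_num)
  have hFd : DifferentiableAt ℝ F p :=
    (hFc.differentiableOn one_ne_zero).differentiableAt (hU.mem_nhds hp)
  set F'' := fderiv ℝ F p with hF''def
  have hF'' : HasFDerivAt F F'' p := hFd.hasFDerivAt
  have hsymm : ∀ v w, F'' v w = F'' w v := fun v w =>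
    second_derivative_symmetric_of_eventually
      (Filter.eventually_of_mem (hU.mem_nhds hp) hxd) hF'' v w
  -- derivatives of t α
  have htd : ∀ α : Fin 2, HasFDerivAt (t α)
      ((F p).comp (0 : (Fin 2 → ℝ) →L[ℝ] (Fin 2 → ℝ)) + F''.flip (Pi.single α 1)) p := by
    intro α
    have : HasFDerivAt (fun ξ => F ξ (Pi.single α 1))
        ((F p).comp (0 : (Fin 2 → ℝ) →L[ℝ] (Fin 2 → ℝ)) + F''.flip (Pi.single α 1)) p :=
      hF''.clm_apply (hasFDerivAt_const _ _)
    convert this using 1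
    funext ξ; exact ht α ξ
  have htfd : ∀ α : Fin 2, fderiv ℝ (t α) p = (F p).comp 0 + F''.flip (Pi.single α 1) :=
    fun α => (htd α).fderiv
  have htapp : ∀ (α : Fin 2) (v : Fin 2 → ℝ), fderiv ℝ (t α) p v = F'' v (Pi.single α 1) := by
    intro α v; rw [htfd α]; simp
  -- G and n differentiability
  set G : (Fin 2 → ℝ) → EuclideanSpace ℝ (Fin 3) := fun ξ => cross3 (t 0 ξ) (t 1 ξ) with hG
  have hGd : DifferentiableAt ℝ G p :=
    differentiableAt_cross (htd 0).differentiableAt (htd 1).differentiableAt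
  have hGne : G p ≠ 0 := hreg p hp
  have hnfun : n = fun ξ => ‖G ξ‖⁻¹ • G ξ := funext fun ξ => hn ξ
  have hnd : DifferentiableAt ℝ n p := by
    rw [hnfun]
    exact ((hGd.norm ℝ hGne).inv (norm_ne_zero_iff.2 hGne)).smul hGd
  -- ⟪n p, Dn e⟫ = 0
  have hnorm1 : ∀ ξ ∈ U, ⟪n ξ, n ξ⟫ = (1:ℝ) := by
    intro ξ hξ
    have h0 : ‖G ξ‖ ≠ 0 := norm_ne_zero_iff.2 (hreg ξ hξ)
    rw [hn ξ, real_inner_smul_left, real_inner_smul_right, real_inner_self_eq_norm_mul_norm]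
    field_simp
    exact div_self h0
  have hnn : ∀ e : Fin 2 → ℝ, ⟪n p, fderiv ℝ n p e⟫ = 0 := by
    intro e
    have hder : HasFDerivAt (fun ξ => ⟪n ξ, n ξ⟫)
        ((fderivInnerCLM ℝ (n p, n p)).comp ((fderiv ℝ n p).prod (fderiv ℝ n p))) p :=
      hnd.hasFDerivAt.inner ℝ hnd.hasFDerivAt
    have heq : (fun ξ => ⟪n ξ, n ξ⟫) =ᶠ[nhds p] fun _ => (1:ℝ) :=
      Filter.eventually_of_mem (hU.mem_nhds hp) hnorm1
    have hz : fderiv ℝ (fun ξ => ⟪n ξ, n ξ⟫) p = 0 := by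
      rw [heq.fderiv_eq]; exact fderiv_const_apply 1
    have := hder.fderiv
    rw [hz] at this
    have happ := congrArg (fun (L : (Fin 2 → ℝ) →L[ℝ] ℝ) => L e) this.symm
    simp only [ContinuousLinearMap.comp_apply, ContinuousLinearMap.prod_apply,
      fderivInnerCLM_apply, ContinuousLinearMap.zero_apply] at happ
    have := real_inner_comm (n p) (fderiv ℝ n p e)
    linarith [happ, this]
  -- notation
  set a := t 0 p with ha
  set b := t 1 p with hb
  set c := G p with hc
  set np := n p with hnp
  set N0 := fderiv ℝ n p e0 with hN0
  set N1 := fderiv ℝ n p e1 with hN1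
  have hcnorm : ‖c‖ ≠ 0 := norm_ne_zero_iff.2 hGne
  have hnpc : np = ‖c‖⁻¹ • c := hn p
  -- ⟪c, N⟫ = 0
  have hcN : ∀ e : Fin 2 → ℝ, ⟪c, fderiv ℝ n p e⟫ = 0 := by
    intro e
    have := hnn e
    rw [hnpc, real_inner_smul_left] at this
    rcases mul_eq_zero.1 this with h' | h'
    · exact absurd h' (inv_ne_zero hcnorm)
    · exact h'
  -- compute the two fderivs in the goal
  have hu1 : fderiv ℝ (fun ξ => cross3 (t 1 ξ) (n ξ)) p e0
      = cross3 (F'' e0 e1) np + cross3 b N0 := by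
    rw [fderiv_cross_apply (htd 1) hnd.hasFDerivAt e0]
    rw [← htfd 1, htapp 1 e0]
  have hu2 : fderiv ℝ (fun ξ => cross3 (n ξ) (t 0 ξ)) p e1
      = cross3 N1 a + cross3 np (F'' e0 e1) := by
    rw [fderiv_cross_apply hnd.hasFDerivAt (htd 0) e1]
    rw [← htfd 0, htapp 0 e1, hsymm e1 e0]
  rw [hu1, hu2]
  -- the tangential vector u
  set A := F'' e0 e1 with hA
  have hcancel : cross3 A np + cross3 b N0 + (cross3 N1 a + cross3 np A)
      = cross3 b N0 + cross3 N1 a := by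
    rw [cross3_anti A np]; abel
  rw [hcancel]
  set u := cross3 b N0 + cross3 N1 a with hu
  have hcab : cross3 a b = c := rfl
  have hcN0 : ⟪c, N0⟫ = 0 := hcN e0
  have hcN1 : ⟪c, N1⟫ = 0 := hcN e1
  have hcc : ⟪c, c⟫ = ‖c‖ * ‖c‖ := real_inner_self_eq_norm_mul_norm c
  have hua : ⟪u, a⟫ = 0 := by
    rw [hu, inner_add_left, inner_cross_cyclic b N0 a, hcab, hcN0, inner_cross_right]
    norm_num
  have hub : ⟪u, b⟫ = 0 := by
    rw [hu, inner_add_left, ← inner_cross_cyclic a b N1, hcab, hcN1, inner_cross_left]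
    norm_num
  have hnpa : ⟪np, a⟫ = 0 := by
    rw [hnpc, real_inner_smul_left, ← hcab, inner_cross_left, mul_zero]
  have hnpb : ⟪np, b⟫ = 0 := by
    rw [hnpc, real_inner_smul_left, ← hcab, inner_cross_right, mul_zero]
  apply eq_zero_of_inner a b
  · rw [hcab]; exact hGne
  · rw [inner_sub_left, real_inner_smul_left, hua, hnpa, mul_zero, sub_zero]
  · rw [inner_sub_left, real_inner_smul_left, hub, hnpb, mul_zero, sub_zero]
  · rw [hcab, inner_sub_left, real_inner_smul_left]
    have h1 : ⟪np, c⟫ = ‖c‖ := by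
      rw [hnpc, real_inner_smul_left, hcc]; field_simp
    have h2 : ⟪u, c⟫ = ⟪np, u⟫ * ‖c‖ := by
      have h3 : ⟪u, np⟫ = ‖c‖⁻¹ * ⟪u, c⟫ := by rw [hnpc, real_inner_smul_right]
      have h4 := real_inner_comm np u
      rw [← h4, h3]; field_simp
    rw [h1, h2]; ring
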